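/- Let X be a Hausdorff (T2) sequential topological space such that every point of X is the intersection of at most 2^ℵ₀ open sets, and such that for every free set D ⊆ X the closure of D is Lindelöf. Then the cardinality of X is at most 2^ℵ₀ (the continuum). -/

import Mathlib

open Cardinal Set Filter Topology

universe u

/-- A set `D` is *free* if it can be enumerated as a free sequence: an injective
transfinite family whose every initial part has closure disjoint from the closure of
the corresponding final part. -/
def IsFreeSet {X : Type u} [TopologicalSpace X] (D : Set X) : Prop :=
  ∃ (η : Ordinal.{u}) (x : Set.Iio η → X), Function.Injective x ∧ Set.range x = D ∧
    ∀ β : Set.Iio η,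
      Disjoint (closure (x '' {α | (α : Ordinal) < (β : Ordinal)}))
        (closure (x '' {α | (β : Ordinal) ≤ (α : Ordinal)}))

namespace SeqCardAux

noncomputable section

variable {X : Type u} [TopologicalSpace X]

/-- Countable tightness from sequentiality. -/
theorem exists_countable_closure [SequentialSpace X] {A : Set X} {y : X}
    (hy : y ∈ closure A) : ∃ B, B ⊆ A ∧ B.Countable ∧ y ∈ closure B := by
  have hseq : IsSeqClosed {w : X | ∃ B, B ⊆ A ∧ B.Countable ∧ w ∈ closure B} := by
    intro u p hu hp
    choose B hBA hBc hscl using hu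
    refine ⟨⋃ n, B n, iUnion_subset hBA, countable_iUnion hBc, ?_⟩
    exact isClosed_closure.mem_of_tendsto hp (Filter.Eventually.of_forall fun n =>
      closure_mono (subset_iUnion B n) (hscl n))
  have hAT : A ⊆ {w : X | ∃ B, B ⊆ A ∧ B.Countable ∧ w ∈ closure B} := fun a ha =>
    ⟨{a}, singleton_subset_iff.2 ha, countable_singleton a, subset_closure (mem_singleton a)⟩
  exact closure_minimal hAT hseq.isClosed hy

def seqLim (S : Set X) : Set X := {y | ∃ u : ℕ → X, (∀ n, u n ∈ S) ∧ Tendsto u atTop (𝓝 y)}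

theorem mk_seqLim_le [T2Space X] (S : Set X) : #(seqLim S) ≤ #S ^ (ℵ₀ : Cardinal.{u}) := by
  have h : ∀ y : seqLim S, ∃ u : ℕ → S, Tendsto (fun n => (u n : X)) atTop (𝓝 (y : X)) := by
    rintro ⟨y, u, hu, ht⟩
    exact ⟨fun n => ⟨u n, hu n⟩, ht⟩
  choose f hf using h
  have hinj : Function.Injective f := by
    intro y y' hyy
    have h1 := hf y
    rw [hyy] at h1
    exact Subtype.ext (tendsto_nhds_unique h1 (hf y'))
  calc #(seqLim S) ≤ #(ℕ → S) := mk_le_of_injective hinj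
    _ = #S ^ (ℵ₀ : Cardinal.{u}) := by
        rw [mk_arrow]
        simp

/-- bounding countable sets of countable ordinals -/
theorem bddy {C : Set Ordinal.{u}} (hC : C.Countable)
    (hCO : ∀ γ ∈ C, γ < (aleph 1).ord) :
    ∃ δ < (aleph 1).ord, ∀ γ ∈ C, γ < δ := by
  rcases C.eq_empty_or_nonempty with rfl | hne
  · refine ⟨1, ?_, fun γ h => absurd h (notMem_empty γ)⟩
    rw [Cardinal.lt_ord]
    simpa using aleph0_lt_aleph_one.trans_le' one_le_aleph0
  · obtain ⟨f, hf⟩ := hC.exists_surjective hne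
    refine ⟨Ordinal.lsub (fun n => ((f n : Ordinal))), ?_, ?_⟩
    · refine Cardinal.lsub_lt_ord_lift_of_isRegular isRegular_aleph_one ?_
        (fun n => hCO _ (f n).2)
      simpa using aleph0_lt_aleph_one
    · intro γ hγ
      obtain ⟨n, hn⟩ := hf ⟨γ, hγ⟩
      have hl := Ordinal.lt_lsub (fun n => ((f n : Ordinal))) n
      rwa [hn] at hl

theorem countable_Iio {α : Ordinal.{u}} (h : α < (aleph 1).ord) : (Iio α).Countable := by
  rw [← countable_coe_iff, ← mk_le_aleph0_iff, Ordinal.mk_Iio_ordinal, ← lift_aleph0.{u+1, u}, Cardinal.lift_le]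
  have h2 := (Cardinal.lt_ord.1 h)
  rw [← succ_aleph0, Order.lt_succ_iff] at h2
  exact h2

section Chain

variable [T2Space X] [Nonempty X] (𝒰 : X → Set (Set X))

def pickPt (s : Set X) : X :=
  @dite _ s.Nonempty (Classical.dec _) (fun h => h.choose) (fun _ => Classical.arbitrary X)

theorem pickPt_mem {s : Set X} (h : s.Nonempty) : pickPt s ∈ s := by
  unfold pickPt
  rw [dif_pos h]
  exact h.choose_spec

def USet (S : Set X) : Set (Set X) := ⋃ x ∈ S, 𝒰 x

def witFam (S : Set X) : Set (Set (Set X)) :=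
  {𝒱 | 𝒱.Countable ∧ 𝒱 ⊆ USet 𝒰 S ∧ ((⋃₀ 𝒱)ᶜ : Set X).Nonempty}

def wit (S : Set X) : Set X := (fun 𝒱 => pickPt ((⋃₀ 𝒱)ᶜ)) '' witFam 𝒰 S

def step (S : Set X) : Set X := (S ∪ seqLim S) ∪ wit 𝒰 S

theorem subset_step (S : Set X) : S ⊆ step 𝒰 S := fun _ h => mem_union_left _ (mem_union_left _ h)

theorem seqLim_subset_step (S : Set X) : seqLim S ⊆ step 𝒰 S :=
  fun _ h => mem_union_left _ (mem_union_right _ h)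

theorem wit_subset_step (S : Set X) : wit 𝒰 S ⊆ step 𝒰 S := fun _ h => mem_union_right _ h

variable (h𝒰 : ∀ x, #(𝒰 x) ≤ (𝔠 : Cardinal.{u}))

include h𝒰 in
theorem mk_USet_le {S : Set X} (hS : #S ≤ (𝔠 : Cardinal.{u})) :
    #(USet 𝒰 S) ≤ (𝔠 : Cardinal.{u}) := by
  refine le_trans (mk_biUnion_le 𝒰 S) ?_
  calc #S * ⨆ x : S, #(𝒰 x.1) ≤ 𝔠 * 𝔠 :=
        mul_le_mul' hS (ciSup_le' fun x => h𝒰 x.1)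
    _ = 𝔠 := mul_eq_self aleph0_le_continuum

include h𝒰 in
theorem mk_wit_le {S : Set X} (hS : #S ≤ (𝔠 : Cardinal.{u})) :
    #(wit 𝒰 S) ≤ (𝔠 : Cardinal.{u}) := by
  have h1 : #(wit 𝒰 S) ≤ #(witFam 𝒰 S) := mk_image_le
  have h2 : witFam 𝒰 S ⊆
      range (fun p : ((ℕ → (USet 𝒰 S : Set (Set X))) ⊕ PUnit.{u+1}) =>
        match p with
        | Sum.inl f => range (fun n => ((f n : Set X)))
        | Sum.inr _ => (∅ : Set (Set X))) := by
    rintro 𝒱 ⟨h𝒱c, h𝒱U, -⟩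
    rcases 𝒱.eq_empty_or_nonempty with rfl | hne
    · exact ⟨Sum.inr PUnit.unit, rfl⟩
    · obtain ⟨f0, hf0⟩ := h𝒱c.exists_surjective hne
      refine ⟨Sum.inl (fun n => ⟨(f0 n : Set X), h𝒱U (f0 n).2⟩), ?_⟩
      simp only []
      ext V
      constructor
      · rintro ⟨n, rfl⟩
        exact (f0 n).2
      · intro hV
        obtain ⟨n, hn⟩ := hf0 ⟨V, hV⟩
        exact ⟨n, congrArg Subtype.val hn⟩
  have h3 : #(witFam 𝒰 S) ≤ #((ℕ → (USet 𝒰 S : Set (Set X))) ⊕ PUnit.{u+1}) :=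
    le_trans (mk_le_mk_of_subset h2) mk_range_le
  have h4 : #((ℕ → (USet 𝒰 S : Set (Set X))) ⊕ PUnit.{u+1}) =
      #(USet 𝒰 S) ^ (ℵ₀ : Cardinal.{u}) + 1 := by
    rw [mk_sum]
    rw [mk_arrow]
    simp
  have h5 : #(USet 𝒰 S) ^ (ℵ₀ : Cardinal.{u}) + 1 ≤ 𝔠 := by
    have := mk_USet_le 𝒰 h𝒰 hS
    calc #(USet 𝒰 S) ^ (ℵ₀ : Cardinal.{u}) + 1 ≤ 𝔠 ^ (ℵ₀ : Cardinal.{u}) + 𝔠 :=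
          add_le_add (power_le_power_right this)
            (le_trans (le_of_lt one_lt_aleph0) aleph0_le_continuum)
      _ = 𝔠 := by rw [continuum_power_aleph0, add_eq_self aleph0_le_continuum]
  calc #(wit 𝒰 S) ≤ _ := h1
    _ ≤ _ := h3
    _ ≤ 𝔠 := by rw [h4]; exact h5

include h𝒰 in
theorem mk_step_le {S : Set X} (hS : #S ≤ (𝔠 : Cardinal.{u})) :
    #(step 𝒰 S) ≤ (𝔠 : Cardinal.{u}) := by
  have h1 : #(seqLim S) ≤ 𝔠 := by
    calc #(seqLim S) ≤ #S ^ (ℵ₀ : Cardinal.{u}) := mk_seqLim_le S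
      _ ≤ 𝔠 ^ (ℵ₀ : Cardinal.{u}) := power_le_power_right hS
      _ = 𝔠 := continuum_power_aleph0
  calc #(step 𝒰 S) ≤ #((S ∪ seqLim S : Set X)) + #(wit 𝒰 S) := mk_union_le _ _
    _ ≤ (#S + #(seqLim S)) + #(wit 𝒰 S) := by gcongr; exact mk_union_le _ _
    _ ≤ (𝔠 + 𝔠) + 𝔠 := add_le_add (add_le_add hS h1) (mk_wit_le 𝒰 h𝒰 hS)
    _ = 𝔠 := by rw [add_eq_self aleph0_le_continuum, add_eq_self aleph0_le_continuum]

def Hc : Ordinal.{u} → Set X :=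
  Ordinal.lt_wf.fix fun α ih => step 𝒰 (⋃ β : Iio α, ih β β.2)

theorem Hc_eq (α : Ordinal.{u}) : Hc 𝒰 α = step 𝒰 (⋃ β : Iio α, Hc 𝒰 β) := by
  rw [Hc]
  exact WellFounded.fix_eq _ _ _

include h𝒰 in
theorem mk_Hc_le : ∀ α < (aleph 1).ord, #(Hc 𝒰 α) ≤ (𝔠 : Cardinal.{u}) := by
  intro α
  induction α using Ordinal.induction with
  | _ α IH =>
    intro hα
    rw [Hc_eq]
    refine mk_step_le 𝒰 h𝒰 ?_
    rcases isEmpty_or_nonempty (Iio α) with he | hne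
    · rw [iUnion_of_empty, mk_emptyCollection]
      exact zero_le
    · have hne' : (Iio α).Nonempty := Set.nonempty_coe_sort.mp hne
      obtain ⟨f, hf⟩ := (countable_Iio hα).exists_surjective hne'
      have heq : (⋃ β : Iio α, Hc 𝒰 β) = ⋃ n : ULift.{u} ℕ, Hc 𝒰 (f n.down : Ordinal) := by
        ext w
        simp only [mem_iUnion]
        constructor
        · rintro ⟨β, hβ⟩
          obtain ⟨n, hn⟩ := hf β
          exact ⟨ULift.up n, by rw [hn]; exact hβ⟩
        · rintro ⟨n, hn⟩
          exact ⟨f n.down, hn⟩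
      rw [heq]
      refine le_trans (mk_iUnion_le _) ?_
      have h2 : ⨆ n : ULift.{u} ℕ, #(Hc 𝒰 (f n.down : Ordinal)) ≤ 𝔠 :=
        ciSup_le' fun n => IH _ (f n.down).2 (lt_trans (f n.down).2 hα)
      calc #(ULift.{u} ℕ) * ⨆ n : ULift.{u} ℕ, #(Hc 𝒰 (f n.down : Ordinal)) ≤ ℵ₀ * 𝔠 :=
            mul_le_mul' (by simp) h2
        _ ≤ 𝔠 * 𝔠 := mul_le_mul' aleph0_le_continuum le_rfl
        _ = 𝔠 := mul_eq_self aleph0_le_continuum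


end Chain

end

end SeqCardAux

open SeqCardAux

theorem sequential_card_le_continuum
    {X : Type u} [TopologicalSpace X] [T2Space X] [SequentialSpace X]
    (hψ : ∀ x : X, ∃ 𝒰 : Set (Set X), #𝒰 ≤ 2 ^ (ℵ₀ : Cardinal.{u}) ∧
      (∀ U ∈ 𝒰, IsOpen U) ∧ ⋂₀ 𝒰 = {x})
    (hfree : ∀ D : Set X, IsFreeSet D → IsLindelof (closure D)) :
    #X ≤ 2 ^ (ℵ₀ : Cardinal.{u}) := by
  rcases isEmpty_or_nonempty X with hX | hX
  · calc #X = 0 := mk_eq_zero X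
      _ ≤ _ := zero_le
  · classical
    choose 𝒰 h𝒰card h𝒰open h𝒰int using hψ
    rw [two_power_aleph0] at h𝒰card ⊢
    set O : Ordinal.{u} := (aleph 1).ord with hOdef
    have hOlim : Order.IsSuccLimit O := isSuccLimit_ord (aleph0_le_aleph 1)
    set H : Set X := ⋃ i : O.ToType, Hc 𝒰 ((Ordinal.ToType.mk (o := O)).symm i : Iio O) with hHdef
    have hmemH : ∀ w : X, w ∈ H ↔ ∃ α, α < O ∧ w ∈ Hc 𝒰 α := by
      intro w
      rw [hHdef]
      simp only [mem_iUnion]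
      constructor
      · rintro ⟨i, hi⟩
        exact ⟨((Ordinal.ToType.mk (o := O)).symm i : Iio O), ((Ordinal.ToType.mk (o := O)).symm i).2, hi⟩
      · rintro ⟨α, hα, hw⟩
        refine ⟨(Ordinal.ToType.mk (o := O)) ⟨α, hα⟩, ?_⟩
        rw [OrderIso.symm_apply_apply]
        exact hw
    have hHcard : #H ≤ 𝔠 := by
      rw [hHdef]
      refine le_trans (mk_iUnion_le _) ?_
      have h1 : #(O.ToType) = aleph 1 := by rw [mk_toType, card_ord]
      have h2 : ⨆ i : O.ToType, #(Hc 𝒰 ((Ordinal.ToType.mk (o := O)).symm i : Iio O)) ≤ 𝔠 :=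
        ciSup_le' fun i => mk_Hc_le 𝒰 h𝒰card _ ((Ordinal.ToType.mk (o := O)).symm i).2
      calc #(O.ToType) * ⨆ i : O.ToType, #(Hc 𝒰 ((Ordinal.ToType.mk (o := O)).symm i : Iio O))
          ≤ aleph 1 * 𝔠 := mul_le_mul' (le_of_eq h1) h2
        _ ≤ 𝔠 * 𝔠 := mul_le_mul' aleph_one_le_continuum le_rfl
        _ = 𝔠 := mul_eq_self aleph0_le_continuum
    have hHseq : IsSeqClosed H := by
      intro u p hu hp
      have h1 : ∀ n, ∃ α, α < O ∧ u n ∈ Hc 𝒰 α := fun n => (hmemH (u n)).1 (hu n)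
      choose a ha1 ha2 using h1
      obtain ⟨β, hβO, hβ⟩ := bddy (countable_range a) (by rintro γ ⟨n, rfl⟩; exact ha1 n)
      have hu' : ∀ n, u n ∈ ⋃ γ : Iio β, Hc 𝒰 γ := fun n =>
        mem_iUnion.2 ⟨⟨a n, hβ _ ⟨n, rfl⟩⟩, ha2 n⟩
      have hp' : p ∈ seqLim (⋃ γ : Iio β, Hc 𝒰 γ) := ⟨u, hu', hp⟩
      exact (hmemH p).2 ⟨β, hβO, by rw [Hc_eq]; exact seqLim_subset_step 𝒰 _ hp'⟩
    have hHclosed : IsClosed H := hHseq.isClosed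
    have hHuniv : H = Set.univ := by
      by_contra hne
      have hz : ∃ z, z ∉ H := by
        by_contra h
        push_neg at h
        exact hne (Set.eq_univ_of_forall h)
      obtain ⟨z, hz⟩ := hz
      have hUex : ∀ x ∈ H, ∃ V, V ∈ 𝒰 x ∧ z ∉ V := by
        intro x hx
        by_contra h
        push_neg at h
        have hzint : z ∈ ⋂₀ 𝒰 x := fun V hV => h V hV
        rw [h𝒰int x, mem_singleton_iff] at hzint
        exact hz (by rw [hzint]; exact hx)
      choose! U hUmem hUz using hUex
      have hUopen : ∀ x ∈ H, IsOpen (U x) := fun x hx => h𝒰open x _ (hUmem x hx)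
      have hxU : ∀ x ∈ H, x ∈ U x := by
        intro x hx
        have hXX : x ∈ ⋂₀ 𝒰 x := by rw [h𝒰int x]; exact mem_singleton x
        exact hXX _ (hUmem x hx)
      by_cases hcov : ∃ 𝒱, 𝒱 ⊆ U '' H ∧ 𝒱.Countable ∧ H ⊆ ⋃₀ 𝒱
      · -- Case A: a countable subfamily covers H; its witness point escapes it.
        obtain ⟨𝒱, h𝒱UH, h𝒱c, h𝒱cov⟩ := hcov
        have hzV : ∀ V ∈ 𝒱, z ∉ V := by
          intro V hV
          obtain ⟨x, hxH, rfl⟩ := h𝒱UH hV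
          exact hUz x hxH
        have hpick : ∀ V : 𝒱, ∃ α, α < O ∧ ∃ x, x ∈ Hc 𝒰 α ∧ x ∈ H ∧ U x = (V : Set X) := by
          rintro ⟨V, hV⟩
          obtain ⟨x, hxH, hUx⟩ := h𝒱UH hV
          obtain ⟨α, hα, hmem⟩ := (hmemH x).1 hxH
          exact ⟨α, hα, x, hmem, hxH, hUx⟩
        choose av hav1 hav2 using hpick
        haveI : Countable 𝒱 := h𝒱c.to_subtype
        obtain ⟨αs, hαsO, hαs⟩ := bddy (countable_range av)
          (by rintro γ ⟨V, rfl⟩; exact hav1 V)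
        have h𝒱fam : 𝒱 ∈ witFam 𝒰 (⋃ γ : Iio αs, Hc 𝒰 γ) := by
          refine ⟨h𝒱c, ?_, ⟨z, ?_⟩⟩
          · intro V hV
            obtain ⟨x, hmem, hxH, hUx⟩ := hav2 ⟨V, hV⟩
            have hxB : x ∈ ⋃ γ : Iio αs, Hc 𝒰 γ :=
              mem_iUnion.2 ⟨⟨av ⟨V, hV⟩, hαs _ ⟨⟨V, hV⟩, rfl⟩⟩, hmem⟩
            have hUxV : U x = V := hUx
            exact mem_iUnion₂.2 ⟨x, hxB, hUxV ▸ hUmem x hxH⟩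
          · intro hzU
            obtain ⟨V, hV, hzV'⟩ := hzU
            exact hzV V hV hzV'
        have hw : pickPt ((⋃₀ 𝒱)ᶜ) ∈ wit 𝒰 (⋃ γ : Iio αs, Hc 𝒰 γ) :=
          mem_image_of_mem _ h𝒱fam
        have hwH : pickPt ((⋃₀ 𝒱)ᶜ) ∈ H :=
          (hmemH _).2 ⟨αs, hαsO, by rw [Hc_eq]; exact wit_subset_step 𝒰 _ hw⟩
        exact pickPt_mem h𝒱fam.2.2 (h𝒱cov hwH)
      · -- Case B: build a free sequence of length ω₁.
        push_neg at hcov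
        set cov : Set X → Set (Set X) := fun A =>
          if h : ∃ 𝒱, 𝒱 ⊆ U '' H ∧ 𝒱.Countable ∧ closure A ⊆ ⋃₀ 𝒱 then h.choose else ∅
          with hcovdef
        have hcovUH : ∀ A, cov A ⊆ U '' H := by
          intro A
          rw [hcovdef]
          dsimp only
          split_ifs with h
          · exact h.choose_spec.1
          · exact empty_subset _
        have hcovc : ∀ A, (cov A).Countable := by
          intro A
          rw [hcovdef]
          dsimp only
          split_ifs with h
          · exact h.choose_spec.2.1
          · exact countable_empty
        have hcovopen : ∀ A V, V ∈ cov A → IsOpen V := by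
          intro A V hV
          obtain ⟨x, hxH, rfl⟩ := hcovUH A hV
          exact hUopen x hxH
        have hcovcov : ∀ A, A ⊆ H → IsFreeSet A → closure A ⊆ ⋃₀ cov A := by
          intro A hAH hAfree
          have hclH : closure A ⊆ H := closure_minimal hAH hHclosed
          obtain ⟨r, hrc, hrcov⟩ := (hfree A hAfree).elim_countable_subcover
            (fun x : closure A => U x) (fun x => hUopen x (hclH x.2))
            (fun x hx => mem_iUnion.2 ⟨⟨x, hx⟩, hxU x (hclH hx)⟩)
          have hex : ∃ 𝒱, 𝒱 ⊆ U '' H ∧ 𝒱.Countable ∧ closure A ⊆ ⋃₀ 𝒱 := by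
            refine ⟨(fun x : closure A => U x) '' r, ?_, hrc.image _, ?_⟩
            · rintro V ⟨x, _, rfl⟩
              exact ⟨x, hclH x.2, rfl⟩
            · intro w hw
              obtain ⟨i, hir, hwi⟩ := mem_iUnion₂.1 (hrcov hw)
              exact ⟨U i, ⟨i, hir, rfl⟩, hwi⟩
          rw [hcovdef]
          dsimp only
          rw [dif_pos hex]
          exact hex.choose_spec.2.2
        set seqx : Ordinal.{u} → X := Ordinal.lt_wf.fix
          (fun α ih => pickPt (H \ ⋃ β : Iic α,
            ⋃₀ cov {w | ∃ γ : Iio α, (γ : Ordinal) < (β : Ordinal) ∧ w = ih γ γ.2}))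
          with hseqxdef
        have harg : ∀ (α : Ordinal.{u}) (β : ↑(Iic α)),
            {w | ∃ γ : ↑(Iio α), (γ : Ordinal) < (β : Ordinal) ∧ w = seqx ↑γ}
              = seqx '' Iio (β : Ordinal) := by
          intro α β
          ext w
          simp only [mem_setOf_eq, mem_image, mem_Iio]
          constructor
          · rintro ⟨γ, h1, h2⟩
            exact ⟨(γ : Ordinal), h1, h2.symm⟩
          · rintro ⟨o, ho, hw⟩
            exact ⟨⟨o, lt_of_lt_of_le ho β.2⟩, ho, hw.symm⟩
        have hseqx_eq : ∀ α, seqx α =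
            pickPt (H \ ⋃ β : Iic α, ⋃₀ cov (seqx '' Iio (β : Ordinal))) := by
          intro α
          conv_lhs => rw [hseqxdef, WellFounded.fix_eq]
          rw [← hseqxdef]
          simp only [harg α]
        have hwitne : ∀ α, α < O → (H \ ⋃ β : Iic α, ⋃₀ cov (seqx '' Iio (β : Ordinal))).Nonempty := by
          intro α hα
          have hIic : (Iic α).Countable := by
            refine ((countable_Iio hα).insert α).mono ?_
            intro γ hγ
            rcases lt_or_eq_of_le (mem_Iic.1 hγ) with h | rfl
            · exact mem_insert_of_mem _ h
            · exact mem_insert _ _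
          have h𝒲UH : (⋃ β ∈ Iic α, cov (seqx '' Iio β)) ⊆ U '' H :=
            iUnion₂_subset fun β _ => hcovUH _
          have h𝒲c : (⋃ β ∈ Iic α, cov (seqx '' Iio β)).Countable :=
            hIic.biUnion fun β _ => hcovc _
          obtain ⟨w, hwH, hw𝒲⟩ := not_subset.1 (hcov _ h𝒲UH h𝒲c)
          refine ⟨w, hwH, fun hwmem => hw𝒲 ?_⟩
          obtain ⟨β, hβ⟩ := mem_iUnion.1 hwmem
          obtain ⟨s, hs, hws⟩ := mem_sUnion.1 hβ
          exact ⟨s, mem_iUnion₂.2 ⟨(β : Ordinal), β.2, hs⟩, hws⟩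
        have ha1 : ∀ α, α < O →
            seqx α ∈ H ∧ ∀ β, β ≤ α → seqx α ∉ ⋃₀ cov (seqx '' Iio β) := by
          intro α hα
          have h1 := pickPt_mem (hwitne α hα)
          rw [← hseqx_eq α] at h1
          exact ⟨h1.1, fun β hβ hWβ => h1.2 (mem_iUnion.2 ⟨⟨β, hβ⟩, hWβ⟩)⟩
        have hfreeseg : ∀ α, α ≤ O → (InjOn seqx (Iio α) ∧ IsFreeSet (seqx '' Iio α)) := by
          intro α
          induction α using Ordinal.induction with
          | _ α IH =>
            intro hα
            have hsubH : ∀ γ, γ < α → seqx γ ∈ H := fun γ hγ =>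
              (ha1 γ (lt_of_lt_of_le hγ hα)).1
            have hWcl : ∀ β, β < α → closure (seqx '' Iio β) ⊆ ⋃₀ cov (seqx '' Iio β) := by
              intro β hβ
              obtain ⟨-, hfr⟩ := IH β hβ (le_of_lt (lt_of_lt_of_le hβ hα))
              refine hcovcov _ ?_ hfr
              rintro w ⟨γ, hγ, rfl⟩
              exact hsubH γ (lt_trans hγ hβ)
            have hWnot : ∀ β γ, β ≤ γ → γ < α → seqx γ ∉ ⋃₀ cov (seqx '' Iio β) :=
              fun β γ h1 h2 => (ha1 γ (lt_of_lt_of_le h2 hα)).2 β h1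
            have hinj : InjOn seqx (Iio α) := by
              have key : ∀ a b, a < b → b < α → seqx a ≠ seqx b := by
                intro a b hab hbα
                have h1 : Order.succ a < α := lt_of_le_of_lt (Order.succ_le_of_lt hab) hbα
                have h2 : seqx a ∈ ⋃₀ cov (seqx '' Iio (Order.succ a)) :=
                  hWcl _ h1 (subset_closure ⟨a, Order.lt_succ a, rfl⟩)
                have h3 : seqx b ∉ ⋃₀ cov (seqx '' Iio (Order.succ a)) :=
                  hWnot _ b (Order.succ_le_of_lt hab) hbα
                intro he
                rw [he] at h2
                exact h3 h2
              intro γ hγ γ' hγ' heq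
              by_contra hnee
              rcases lt_or_gt_of_ne hnee with h | h
              · exact key γ γ' h hγ' heq
              · exact key γ' γ h hγ heq.symm
            refine ⟨hinj, α, fun β : Iio α => seqx β, ?_, ?_, ?_⟩
            · intro β β' hββ'
              exact Subtype.ext (hinj β.2 β'.2 hββ')
            · exact (Set.image_eq_range _ _).symm
            · intro β
              have e1 : (fun γ : Iio α => seqx γ) '' {γ | (γ : Ordinal) < (β : Ordinal)}
                  = seqx '' Iio (β : Ordinal) := by
                ext w
                constructor
                · rintro ⟨γ, hγ, rfl⟩
                  exact ⟨(γ : Ordinal), hγ, rfl⟩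
                · rintro ⟨o, ho, rfl⟩
                  exact ⟨⟨o, mem_Iio.mpr (lt_trans ho (mem_Iio.mp β.2))⟩, ho, rfl⟩
              have e2 : (fun γ : Iio α => seqx γ) '' {γ | (β : Ordinal) ≤ (γ : Ordinal)}
                  = seqx '' {o | (β : Ordinal) ≤ o ∧ o < α} := by
                ext w
                constructor
                · rintro ⟨γ, hγ, rfl⟩
                  exact ⟨(γ : Ordinal), ⟨hγ, γ.2⟩, rfl⟩
                · rintro ⟨o, ⟨h1, h2⟩, rfl⟩
                  exact ⟨⟨o, mem_Iio.mpr h2⟩, h1, rfl⟩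
              rw [e1, e2]
              have hcl1 : closure (seqx '' Iio (β : Ordinal)) ⊆ ⋃₀ cov (seqx '' Iio (β : Ordinal)) :=
                hWcl β β.2
              have hcl2 : closure (seqx '' {o | (β : Ordinal) ≤ o ∧ o < α})
                  ⊆ (⋃₀ cov (seqx '' Iio (β : Ordinal)))ᶜ := by
                refine closure_minimal ?_
                  (isOpen_sUnion fun V hV => hcovopen _ V hV).isClosed_compl
                rintro w ⟨o, ⟨h1, h2⟩, rfl⟩
                exact hWnot β o h1 h2
              exact disjoint_left.2 fun w hw1 hw2 => (hcl2 hw2) (hcl1 hw1)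
        obtain ⟨hinjO, hfreeO⟩ := hfreeseg O le_rfl
        have hWclO : ∀ δ, δ ≤ O → closure (seqx '' Iio δ) ⊆ ⋃₀ cov (seqx '' Iio δ) := by
          intro δ hδ
          obtain ⟨-, hfr⟩ := hfreeseg δ hδ
          refine hcovcov _ ?_ hfr
          rintro w ⟨γ, hγ, rfl⟩
          exact (ha1 γ (lt_of_lt_of_le hγ hδ)).1
        have hLin := hfree _ hfreeO
        have hy : ∃ y, ∀ δ, δ < O → y ∈ closure (seqx '' {o | δ ≤ o ∧ o < O}) := by
          by_contra hcon
          push_neg at hcon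
          obtain ⟨r, hrc, hrcov⟩ := hLin.elim_countable_subcover
            (fun δ : Iio O => (closure (seqx '' {o | (δ : Ordinal) ≤ o ∧ o < O}))ᶜ)
            (fun _ => isClosed_closure.isOpen_compl)
            (by
              intro w hw
              obtain ⟨δ, hδ, hn⟩ := hcon w
              exact mem_iUnion.2 ⟨⟨δ, hδ⟩, hn⟩)
          obtain ⟨δs, hδsO, hδs⟩ := bddy (hrc.image (fun i => (i : Ordinal)))
            (by rintro γ ⟨i, _, rfl⟩; exact i.2)
          have hmem : seqx δs ∈ closure (seqx '' Iio O) := subset_closure ⟨δs, hδsO, rfl⟩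
          obtain ⟨i, hir, hin⟩ := mem_iUnion₂.1 (hrcov hmem)
          exact hin (subset_closure
            ⟨δs, ⟨le_of_lt (hδs _ (mem_image_of_mem _ hir)), hδsO⟩, rfl⟩)
        obtain ⟨y, hyF⟩ := hy
        have hyD : y ∈ closure (seqx '' Iio O) := by
          refine closure_mono (image_mono ?_) (hyF 0 hOlim.pos)
          intro o ho
          exact ho.2
        obtain ⟨B, hBD, hBc, hyB⟩ := exists_countable_closure hyD
        have hCc : {γ : Ordinal.{u} | γ < O ∧ seqx γ ∈ B}.Countable := by
          rw [← countable_coe_iff]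
          haveI := hBc.to_subtype
          refine Function.Injective.countable
            (f := fun γ : {γ : Ordinal.{u} | γ < O ∧ seqx γ ∈ B} => (⟨seqx γ, γ.2.2⟩ : B)) ?_
          intro γ γ' h
          exact Subtype.ext (hinjO γ.2.1 γ'.2.1 (congrArg Subtype.val h))
        obtain ⟨δ, hδO, hδC⟩ := bddy hCc (fun γ hγ => hγ.1)
        have hBsub : B ⊆ seqx '' Iio δ := by
          intro b hb
          obtain ⟨γ, hγ, rfl⟩ := hBD hb
          exact ⟨γ, hδC γ ⟨hγ, hb⟩, rfl⟩
        have h1 : y ∈ ⋃₀ cov (seqx '' Iio δ) :=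
          hWclO δ (le_of_lt hδO) (closure_mono hBsub hyB)
        have h2 : closure (seqx '' {o | δ ≤ o ∧ o < O}) ⊆ (⋃₀ cov (seqx '' Iio δ))ᶜ := by
          refine closure_minimal ?_
            (isOpen_sUnion fun V hV => hcovopen _ V hV).isClosed_compl
          rintro w ⟨o, ⟨ho1, ho2⟩, rfl⟩
          exact (ha1 o ho2).2 δ ho1
        exact h2 (hyF δ hδO) h1
    calc #X = #(Set.univ : Set X) := mk_univ.symm
      _ = #H := by rw [hHuniv]
      _ ≤ 𝔠 := hHcard
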